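/- Let F be a field, X a sequence of n elements and Y a sequence of m elements of F such that all m+n elements together are pairwise distinct. Then for every integer l ≥ 0, LS_{⟨(m+l)^n⟩}(−X; Y) = (−1)^{l·n} · e(X)^l · Δ(Y; X), where ⟨(m+l)^n⟩ is the partition with n parts all equal to m+l (its (m,n)-index is 0). -/

import Mathlib

open scoped Classical

/-- `f : ℕ → ℕ` represents a partition via its parts `f 1 ≥ f 2 ≥ ⋯`
(indices start at `1`; we normalize the unused value at `0` by `f 0 = f 1`). -/
def IsPartition (f : ℕ → ℕ) : Prop :=
  f 0 = f 1 ∧ (∀ i j, i ≤ j → f j ≤ f i) ∧ ∃ N, ∀ i, N ≤ i → f i = 0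

/-- the partition `f` has length (number of positive parts) at most `r`,
i.e. `l(f) ≤ r`. -/
def LenLE (f : ℕ → ℕ) (r : ℕ) : Prop := ∀ i, r < i → f i = 0

/-- two partitions have the same parts. -/
def EqParts (f g : ℕ → ℕ) : Prop := ∀ i, 1 ≤ i → f i = g i

/-- normalize the value at the (unused) index `0`. -/
def pad (f : ℕ → ℕ) : ℕ → ℕ := fun i => if i = 0 then f 1 else f i

/-- the multiset `{f i + N - i : i = 1, …, N}`. -/
def hooks (N : ℕ) (f : ℕ → ℕ) : Multiset ℕ :=
  (Multiset.range N).map (fun i => f (i + 1) + N - (i + 1))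

/-- `lam` is the `(m,n)`-overlap of `mu` and `nu`, i.e. `mu ⋆_{m,n} nu = lam`:
`lam` is a partition of length at most `m + n` such that the sequence
`(lam i + (m+n) - i)_{i=1..m+n}` is a rearrangement of the concatenation of
`(mu i + m - i)_{i=1..m}` and `(nu j + n - j)_{j=1..n}`. -/
def IsOverlap (m n : ℕ) (mu nu lam : ℕ → ℕ) : Prop :=
  LenLE lam (m + n) ∧ hooks (m + n) lam = hooks m mu + hooks n nu

/-- `mu ⋆_{m,n} nu = ∞`: the two hook sequences share a common value. -/
def OverlapInfinite (m n : ℕ) (mu nu : ℕ → ℕ) : Prop :=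
  ∃ a, a ∈ hooks m mu ∧ a ∈ hooks n nu

/-- the sign `ε_{m,n}(mu, nu)` of the permutation sorting the concatenation of
`(mu i + m - i)_{i=1..m}` and `(nu j + n - j)_{j=1..n}` into strictly decreasing
order, computed as `(-1)` to the number of inversions. -/
def overlapSign (m n : ℕ) (mu nu : ℕ → ℕ) : ℤ :=
  (-1) ^ (((Finset.range m ×ˢ Finset.range n).filter (fun p =>
    mu (p.1 + 1) + m - (p.1 + 1) < nu (p.2 + 1) + n - (p.2 + 1))).card)

/-- the truncation `(f_1, …, f_r)` of a partition. -/
def truncateP (f : ℕ → ℕ) (r : ℕ) : ℕ → ℕ := pad fun i => if i ≤ r then f i else 0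

/-- `μ + ⟨k^l⟩ = (μ_1 + k, …, μ_l + k)`. -/
def addRect (mu : ℕ → ℕ) (k l : ℕ) : ℕ → ℕ := pad fun i => if i ≤ l then mu i + k else 0

/-- `μ − ⟨k^l⟩ = (μ_1 − k, …, μ_l − k)`. -/
def subRect (mu : ℕ → ℕ) (k l : ℕ) : ℕ → ℕ := pad fun i => if i ≤ l then mu i - k else 0

/-- `ν ∪ a`: `ν` regarded as a sequence of length `r`, with the sequence `a`
appended after position `r`. -/
def concatSeq (nu : ℕ → ℕ) (r : ℕ) (tail : ℕ → ℕ) : ℕ → ℕ :=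
  pad fun i => if i ≤ r then nu i else tail (i - r)

/-- the rectangular partition `⟨a^b⟩` (with `b` parts equal to `a`). -/
def rectP (a b : ℕ) : ℕ → ℕ := pad fun i => if i ≤ b then a else 0

/-- the `(m,n)`-complement `λ̃ = (m − λ_n, …, m − λ_1)` of a partition `λ ⊂ ⟨m^n⟩`. -/
def complSeq (m n : ℕ) (lam : ℕ → ℕ) : ℕ → ℕ :=
  pad fun i => if i ≤ n then m - lam (n + 1 - i) else 0

noncomputable section

/-- the `i`-th part `λ'_i = #{j ≥ 1 : λ_j ≥ i}` of the conjugate partition. -/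
def conjPart (f : ℕ → ℕ) (i : ℕ) : ℕ := {j : ℕ | 1 ≤ j ∧ i ≤ f j}.ncard

/-- the conjugate partition `λ'`. -/
def conjP (f : ℕ → ℕ) : ℕ → ℕ := pad fun i => conjPart f i

/-- the set of integers `k ≤ min{m,n}` with `λ_{n+1−k} ≤ m − k`. -/
def indexSet (m n : ℕ) (lam : ℕ → ℕ) : Set ℤ :=
  {k : ℤ | k ≤ min (m : ℤ) (n : ℤ) ∧ (lam ((n : ℤ) + 1 - k).toNat : ℤ) ≤ (m : ℤ) - k}

/-- `k` is the `(m,n)`-index of `lam`: the largest integer `k ≤ min{m,n}`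
with `λ_{n+1−k} ≤ m − k`. -/
def IsIndex (m n : ℕ) (lam : ℕ → ℕ) (k : ℤ) : Prop := IsGreatest (indexSet m n lam) k

/-- the `(m,n)`-index of `lam`. -/
def indexOf (m n : ℕ) (lam : ℕ → ℕ) : ℤ := sSup (indexSet m n lam)

variable {F : Type*} [Field F]

/-- `Δ(X) = ∏_{i<j} (X_i − X_j)`. -/
def vanDet {n : ℕ} (X : Fin n → F) : F :=
  ∏ i : Fin n, ∏ j : Fin n, if i < j then X i - X j else 1

/-- `Δ(X; Y) = ∏_{x ∈ X, y ∈ Y} (x − y)`. -/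
def vanPair {n m : ℕ} (X : Fin n → F) (Y : Fin m → F) : F :=
  ∏ i, ∏ j, (X i - Y j)

/-- the Schur function `s_λ(X)`. -/
def schur {n : ℕ} (lam : ℕ → ℕ) (X : Fin n → F) : F :=
  if LenLE lam n then
    (Matrix.of fun i j : Fin n =>
      X i ^ (lam ((j : ℕ) + 1) + n - ((j : ℕ) + 1))).det / vanDet X
  else 0

/-- the subsequence of `X` indexed by `I` (in increasing order of indices). -/
def subSeq {n : ℕ} (X : Fin n → F) (I : Finset (Fin n)) : Fin I.card → F :=
  fun j => X (I.orderIsoOfFin rfl j).1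

/-- the sign `ε(λ) = (−1)^{λ_1+⋯+λ_{n−k}} (−1)^{mk} (−1)^{k(k−1)/2}` from the
determinantal formula. -/
def LSsign (m n k : ℕ) (lam : ℕ → ℕ) : ℤ :=
  (-1) ^ (∑ i ∈ Finset.range (n - k), lam (i + 1)) * (-1) ^ (m * k) *
    (-1) ^ (k * (k - 1) / 2)

/-- the Moens–Van der Jeugt block matrix. -/
def LSmat (k : ℕ) {n m : ℕ} (lam : ℕ → ℕ) (X : Fin n → F) (Y : Fin m → F) :
    Matrix (Fin (n + (m - k))) (Fin (n + (m - k))) F :=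
  Matrix.of fun r c =>
    if hr : (r : ℕ) < n then
      if hc : (c : ℕ) < m then (X ⟨(r : ℕ), hr⟩ - Y ⟨(c : ℕ), hc⟩)⁻¹
      else X ⟨(r : ℕ), hr⟩ ^
        ((lam ((c : ℕ) - m + 1) : ℤ) + (n : ℤ) - (m : ℤ) - (((c : ℕ) - m + 1 : ℕ) : ℤ))
    else
      if hc : (c : ℕ) < m then
        Y ⟨(c : ℕ), hc⟩ ^
          ((conjPart lam ((r : ℕ) - n + 1) : ℤ) + (m : ℤ) - (n : ℤ) - (((r : ℕ) - n + 1 : ℕ) : ℤ))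
      else 0

/-- the Littlewood–Schur function `LS_λ(−X; Y)`, defined by the determinantal
formula of Moens and Van der Jeugt: it is `0` if the `(m,n)`-index `k` of `λ` is
negative, and otherwise equals `ε(λ) · Δ(Y;X)/(Δ(X)Δ(Y)) · det M`. -/
def LS {n m : ℕ} (lam : ℕ → ℕ) (X : Fin n → F) (Y : Fin m → F) : F :=
  if indexOf m n lam < 0 then 0
  else (LSsign m n (indexOf m n lam).toNat lam : F) * vanPair Y X /
    (vanDet X * vanDet Y) * (LSmat (indexOf m n lam).toNat lam X Y).det

/-- `walkMu lam n I` is the partition with `i`-th part `λ_{V_i} + n + i − V_i`,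
where `V_1 < ⋯ < V_card(I)` is the increasing (1-based) enumeration of `I`. -/
def walkMu (lam : ℕ → ℕ) (n : ℕ) {N : ℕ} (I : Finset (Fin N)) : ℕ → ℕ :=
  pad fun i =>
    if h : 1 ≤ i ∧ i ≤ I.card then
      lam (((I.orderIsoOfFin rfl ⟨i - 1, by omega⟩).1 : ℕ) + 1) +
        (n + i - (((I.orderIsoOfFin rfl ⟨i - 1, by omega⟩).1 : ℕ) + 1))
    else 0

/-- `C_N(K)`: the set `{N − j + 1 : j ∈ {1,…,N} ∖ K}`. -/
def Cfin (N : ℕ) (K : Finset ℕ) : Finset ℕ :=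
  (Finset.Icc 1 N \ K).image (fun j => N + 1 - j)

/-- the subpartition `sub_N(λ, s)`: its `j`-th part is
`λ_{s_j} + (N − s_j) − (r − j)`, where `s_1 < ⋯ < s_r` are the elements of `s`. -/
def subPartF (N : ℕ) (lam : ℕ → ℕ) (s : Finset ℕ) : ℕ → ℕ :=
  pad fun j =>
    if h : 1 ≤ j ∧ j ≤ s.card then
      lam ((s.orderIsoOfFin rfl ⟨j - 1, by omega⟩).1) +
        (N - (s.orderIsoOfFin rfl ⟨j - 1, by omega⟩).1) - (s.card - j)
    else 0

end

/-- `α` is a quasi-partition associated to the subset with membership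
predicate `inV` (the complement being taken inside `{1, …, m+n}`). -/
def IsQuasiPartition (m n : ℕ) (inV : ℕ → Prop) (α : ℕ → ℤ) : Prop :=
  0 ≤ α (m + n) ∧
  (∀ i, 1 < i → i < m + n → ¬(α (i - 1) < α i ∧ α i < α (i + 1))) ∧
  (∀ i, 1 ≤ i → i < m + n → ((inV i ↔ inV (i + 1)) → α (i + 1) ≤ α i)) ∧
  (∀ i, 1 ≤ i → i < m + n → (¬(inV i ↔ inV (i + 1)) → α (i + 1) ≤ α i + 1))

/-- the integer sequence `α_1, …, α_N` is a partition: non-increasing and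
non-negative. -/
def IsPartitionSeqZ (N : ℕ) (α : ℕ → ℤ) : Prop :=
  (∀ i j, 1 ≤ i → i ≤ j → j ≤ N → α j ≤ α i) ∧ ∀ i, 1 ≤ i → i ≤ N → 0 ≤ α i

section Helpers

open Finset Matrix

lemma rectP_of_le {a b i : ℕ} (h1 : 1 ≤ i) (h2 : i ≤ b) : rectP a b i = a := by
  simp only [rectP, pad]
  rw [if_neg (by omega), if_pos h2]

lemma rectP_of_gt {a b i : ℕ} (h : b < i) : rectP a b i = 0 := by
  simp only [rectP, pad]
  rw [if_neg (by omega), if_neg (by omega)]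

lemma conjPart_rect {a b i : ℕ} (h1 : 1 ≤ i) (h2 : i ≤ a) :
    conjPart (rectP a b) i = b := by
  have hset : {j : ℕ | 1 ≤ j ∧ i ≤ rectP a b j} = Set.Icc 1 b := by
    ext j
    simp only [Set.mem_setOf_eq, Set.mem_Icc]
    constructor
    · rintro ⟨hj1, hj2⟩
      refine ⟨hj1, ?_⟩
      by_contra hb
      rw [rectP_of_gt (by omega)] at hj2
      omega
    · rintro ⟨hj1, hj2⟩
      rw [rectP_of_le hj1 hj2]
      exact ⟨hj1, h2⟩
  rw [conjPart, hset]
  rw [← Finset.coe_Icc, Set.ncard_coe_finset]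
  simp

lemma indexOf_rect (m n l : ℕ) : indexOf m n (rectP (m + l) n) = 0 := by
  have hg : IsGreatest (indexSet m n (rectP (m + l) n)) 0 := by
    constructor
    · constructor
      · exact le_min (by positivity) (by positivity)
      · have : ((n : ℤ) + 1 - 0).toNat = n + 1 := by omega
        rw [this, rectP_of_gt (by omega)]
        simp
    · rintro k ⟨hk1, hk2⟩
      by_contra hk
      push_neg at hk
      have hkn : k ≤ (n : ℤ) := le_trans hk1 (min_le_right _ _)
      have hkm : k ≤ (m : ℤ) := le_trans hk1 (min_le_left _ _)
      have h1 : 1 ≤ ((n : ℤ) + 1 - k).toNat := by omega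
      have h2 : ((n : ℤ) + 1 - k).toNat ≤ n := by omega
      rw [rectP_of_le h1 h2] at hk2
      push_cast at hk2
      omega
  exact hg.csSup_eq

end Helpers
section Helpers2
open Finset Matrix

variable {F : Type*} [Field F]

lemma rotpow_val {N : ℕ} (hN : 0 < N) (k : ℕ) (j : Fin N) :
    ((((finRotate N) ^ k) j : Fin N) : ℕ) = ((j : ℕ) + k) % N := by
  obtain ⟨N', rfl⟩ := Nat.exists_eq_succ_of_ne_zero hN.ne'
  induction k with
  | zero => simp [Nat.mod_eq_of_lt j.isLt]
  | succ k ih =>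
    rw [pow_succ', Equiv.Perm.mul_apply, finRotate_succ_apply, Fin.add_def, ih, Fin.val_one']
    show ((↑j + k) % N'.succ + 1 % N'.succ) % N'.succ = _
    conv_lhs => rw [← Nat.add_mod]
    rw [Nat.add_assoc]

lemma vanDet_eq {n : ℕ} (X : Fin n → F) :
    vanDet X = ∏ i : Fin n, ∏ j : Fin n, if i < j then X i - X j else 1 := rfl

lemma det_revVandermonde {N : ℕ} (v : Fin N → F) :
    (Matrix.of fun r j : Fin N => v r ^ (N - 1 - (j : ℕ))).det = vanDet v := by
  rw [← Matrix.det_submatrix_equiv_self Fin.revPerm]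
  have h1 : ((Matrix.of fun r j : Fin N => v r ^ (N - 1 - (j : ℕ))).submatrix
      Fin.revPerm Fin.revPerm) = Matrix.vandermonde (fun i => v i.rev) := by
    ext r j
    simp only [Matrix.submatrix_apply, Matrix.of_apply, Matrix.vandermonde_apply,
      Fin.revPerm_apply]
    congr 1
    have := j.isLt
    simp only [Fin.val_rev]
    omega
  rw [h1, Matrix.det_vandermonde]
  have h2 : ∀ i : Fin N, ∏ j ∈ Ioi i, (v j.rev - v i.rev)
      = ∏ j : Fin N, if i < j then v j.rev - v i.rev else 1 := by
    intro i
    rw [← Finset.filter_lt_eq_Ioi, Finset.prod_filter]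
  simp_rw [h2]
  rw [← Equiv.prod_comp Fin.revPerm
    (fun i => ∏ j : Fin N, if i < j then v j.rev - v i.rev else 1)]
  have h3 : ∀ i : Fin N, (∏ j : Fin N, if Fin.revPerm i < j then v j.rev - v (Fin.revPerm i).rev else 1)
      = ∏ j : Fin N, if j < i then v j - v i else 1 := by
    intro i
    rw [← Equiv.prod_comp Fin.revPerm (fun j => if Fin.revPerm i < j then v j.rev - v (Fin.revPerm i).rev else 1)]
    refine Finset.prod_congr rfl (fun j _ => ?_)
    simp only [Fin.revPerm_apply, Fin.rev_rev, Fin.rev_lt_rev]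
  simp_rw [h3]
  rw [Finset.prod_comm]
  rfl

lemma vanDet_ne_zero {n : ℕ} {X : Fin n → F} (hX : Function.Injective X) :
    vanDet X ≠ 0 := by
  rw [vanDet_eq]
  refine Finset.prod_ne_zero_iff.2 (fun i _ => Finset.prod_ne_zero_iff.2 (fun j _ => ?_))
  split
  · exact sub_ne_zero.2 (fun h => absurd (hX h) (by rename_i hij; exact ne_of_lt hij))
  · exact one_ne_zero

end Helpers2
section Helpers3
open Finset Matrix Equiv

variable {F : Type*} [Field F]

lemma LSmat_det_rect {m n l : ℕ} (X : Fin n → F) (Y : Fin m → F) :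
    (LSmat 0 (rectP (m + l) n) X Y).det =
      ((Equiv.Perm.sign ((finRotate (n + m)) ^ m) : ℤ) : F) *
        ((∏ i, X i) ^ l * vanDet X * vanDet Y) := by
  classical
  set lam := rectP (m + l) n with hlam
  set e : Fin n ⊕ Fin m ≃ Fin (n + m) := finSumFinEquiv with he
  set τ : Equiv.Perm (Fin (n + m)) := (finRotate (n + m)) ^ m with hτ
  set π : Equiv.Perm (Fin n ⊕ Fin m) := (Equiv.permCongr e).symm τ with hπ
  have hcol : ∀ c, (e (π c) : Fin (n + m)) = τ (e c) := by
    intro c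
    simp [hπ, Equiv.permCongr_symm, Equiv.permCongr_apply]
  set B : Matrix (Fin n) (Fin n) F :=
    Matrix.of (fun r j => X r ^ (l + (n - 1 - (j : ℕ)))) with hB
  set A : Matrix (Fin n) (Fin m) F := Matrix.of (fun r c => (X r - Y c)⁻¹) with hA
  set C : Matrix (Fin m) (Fin m) F :=
    Matrix.of (fun i c => Y c ^ (m - 1 - (i : ℕ))) with hC
  have hNpos : ∀ _ : (Fin n ⊕ Fin m), 0 < n + m := by
    rintro (r | r) <;> (have := r.isLt; omega)
  have hveL : ∀ r : Fin n, ((e (Sum.inl r) : Fin (n + m)) : ℕ) = (r : ℕ) := by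
    intro r; simp [he]
  have hveR : ∀ r : Fin m, ((e (Sum.inr r) : Fin (n + m)) : ℕ) = n + (r : ℕ) := by
    intro r; simp [he]
  have hcolL : ∀ c : Fin n, ((e (π (Sum.inl c)) : Fin (n + m)) : ℕ) = (c : ℕ) + m := by
    intro c
    rw [hcol, hτ, rotpow_val (hNpos (Sum.inl c)), hveL]
    exact Nat.mod_eq_of_lt (by omega)
  have hcolR : ∀ c : Fin m, ((e (π (Sum.inr c)) : Fin (n + m)) : ℕ) = (c : ℕ) := by
    intro c
    rw [hcol, hτ, rotpow_val (hNpos (Sum.inr c)), hveR]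
    rw [show n + (c : ℕ) + m = (n + m) + (c : ℕ) by omega, Nat.add_mod_left]
    exact Nat.mod_eq_of_lt (by omega)
  have hP : Matrix.fromBlocks B A 0 C =
      ((LSmat 0 lam X Y).submatrix e e).submatrix id π := by
    ext r c
    rcases r with r | r <;> rcases c with c | c <;>
      simp only [Matrix.submatrix_apply, id_eq, Matrix.fromBlocks_apply₁₁,
        Matrix.fromBlocks_apply₁₂, Matrix.fromBlocks_apply₂₁, Matrix.fromBlocks_apply₂₂,
        LSmat, Matrix.of_apply]
    · -- row inl r, col inl c : power block B
      rw [dif_pos (by rw [hveL]; exact r.isLt), dif_neg (by rw [hcolL]; omega)]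
      have h1 : ((e (π (Sum.inl c)) : Fin (n+m)) : ℕ) - m + 1 = (c : ℕ) + 1 := by
        rw [hcolL]; omega
      rw [h1]
      have h2 : lam ((c : ℕ) + 1) = m + l := rectP_of_le (by omega) (by omega)
      rw [h2]
      have h3 : ((m + l : ℕ) : ℤ) + (n : ℤ) - (m : ℤ) - (((c : ℕ) + 1 : ℕ) : ℤ)
          = ((l + (n - 1 - (c : ℕ)) : ℕ) : ℤ) := by
        have := c.isLt; push_cast; omega
      rw [h3, zpow_natCast]
      have hXr : ∀ (h : ((e (Sum.inl r) : Fin (n+m)) : ℕ) < n),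
          X ⟨((e (Sum.inl r) : Fin (n+m)) : ℕ), h⟩ = X r :=
        fun h => congrArg X (Fin.ext (hveL r))
      rw [hXr, hB]
      rfl
    · -- row inl r, col inr c : Cauchy block A
      rw [dif_pos (by rw [hveL]; exact r.isLt), dif_pos (by rw [hcolR]; exact c.isLt)]
      have hXr : ∀ (h : ((e (Sum.inl r) : Fin (n+m)) : ℕ) < n),
          X ⟨((e (Sum.inl r) : Fin (n+m)) : ℕ), h⟩ = X r :=
        fun h => congrArg X (Fin.ext (hveL r))
      have hYc : ∀ (h : ((e (π (Sum.inr c)) : Fin (n+m)) : ℕ) < m),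
          Y ⟨((e (π (Sum.inr c)) : Fin (n+m)) : ℕ), h⟩ = Y c :=
        fun h => congrArg Y (Fin.ext (hcolR c))
      rw [hXr, hYc]
      rfl
    · -- row inr r, col inl c : zero block
      rw [dif_neg (by rw [hveR]; omega), dif_neg (by rw [hcolL]; omega)]
      rfl
    · -- row inr r, col inr c : block C
      rw [dif_neg (by rw [hveR]; omega), dif_pos (by rw [hcolR]; exact c.isLt)]
      have h1 : ((e (Sum.inr r) : Fin (n+m)) : ℕ) - n + 1 = (r : ℕ) + 1 := by
        rw [hveR]; omega
      rw [h1]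
      have h2 : conjPart lam ((r : ℕ) + 1) = n :=
        conjPart_rect (by omega) (by have := r.isLt; omega)
      rw [h2]
      have h3 : ((n : ℕ) : ℤ) + (m : ℤ) - (n : ℤ) - (((r : ℕ) + 1 : ℕ) : ℤ)
          = ((m - 1 - (r : ℕ) : ℕ) : ℤ) := by
        have := r.isLt; push_cast; omega
      rw [h3, zpow_natCast]
      have hYc : ∀ (h : ((e (π (Sum.inr c)) : Fin (n+m)) : ℕ) < m),
          Y ⟨((e (π (Sum.inr c)) : Fin (n+m)) : ℕ), h⟩ = Y c :=
        fun h => congrArg Y (Fin.ext (hcolR c))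
      rw [hYc, hC]
      rfl
  -- determinant computation
  have hdetP : (Matrix.fromBlocks B A 0 C).det = B.det * C.det :=
    Matrix.det_fromBlocks_zero₂₁ B A C
  have hdetB : B.det = (∏ i, X i) ^ l * vanDet X := by
    have : B = Matrix.of (fun r j : Fin n => (fun i => X i ^ l) r *
        (Matrix.of fun r j : Fin n => X r ^ (n - 1 - (j : ℕ))) r j) := by
      ext r j
      simp [hB, pow_add]
    rw [this, Matrix.det_mul_column, det_revVandermonde, Finset.prod_pow]
  have hdetC : C.det = vanDet Y := by
    have hCT : C.transpose = Matrix.of (fun c i : Fin m => Y c ^ (m - 1 - (i : ℕ))) := by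
      ext c i
      simp [hC]
    rw [← Matrix.det_transpose, hCT, det_revVandermonde]
  have hperm := Matrix.det_permute' π ((LSmat 0 lam X Y).submatrix e e)
  have hsub : ((LSmat 0 lam X Y).submatrix e e).det = (LSmat 0 lam X Y).det :=
    Matrix.det_submatrix_equiv_self e (LSmat 0 lam X Y)
  rw [← hP, hdetP, hdetB, hdetC, hsub] at hperm
  have hsignpi : Equiv.Perm.sign π = Equiv.Perm.sign τ := by
    rw [hπ, Equiv.permCongr_symm, Equiv.Perm.sign_permCongr]
  rw [hsignpi] at hperm
  have hsq : ((Equiv.Perm.sign τ : ℤ) : F) * ((Equiv.Perm.sign τ : ℤ) : F) = 1 := by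
    rcases Int.units_eq_one_or (Equiv.Perm.sign τ) with h | h <;> rw [h] <;> norm_num
  have h2 := congrArg (fun z => ((Equiv.Perm.sign τ : ℤ) : F) * z) hperm
  rw [show ((Equiv.Perm.sign τ : ℤ) : F) * (((Equiv.Perm.sign τ : ℤ) : F) *
      (LSmat 0 lam X Y).det) = (LSmat 0 lam X Y).det from by
    rw [← mul_assoc, hsq, one_mul]] at h2
  exact h2.symm

end Helpers3
section Helpers4
open Finset Matrix Equiv

variable {F : Type*} [Field F]

lemma sign_rot (n m : ℕ) :
    ((Equiv.Perm.sign ((finRotate (n + m)) ^ m) : ℤ) : F) = (-1 : F) ^ ((n + m - 1) * m) := by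
  rcases Nat.eq_zero_or_pos (n + m) with h | h
  · have hm : m = 0 := by omega
    subst hm
    simp
  · obtain ⟨K, hK⟩ := Nat.exists_eq_succ_of_ne_zero h.ne'
    rw [hK, map_pow, sign_finRotate, show K + 1 - 1 = K from rfl]
    push_cast
    rw [← pow_mul]

lemma neg_one_pow_key (n m l : ℕ) :
    (-1 : F) ^ (n * (m + l)) * (-1 : F) ^ ((n + m - 1) * m) = (-1 : F) ^ (l * n) := by
  have heq : n * (m + l) + (n + m - 1) * m = l * n + (2 * (n * m) + (m - 1) * m) := by
    cases m with
    | zero => simp [Nat.mul_comm n l]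
    | succ m' =>
      rw [show n + (m' + 1) - 1 = n + m' by omega, Nat.succ_sub_one]
      ring
  have hev : Even (2 * (n * m) + (m - 1) * m) := by
    refine Even.add ⟨n * m, by ring⟩ ?_
    rcases Nat.even_or_odd m with h | h
    · exact h.mul_left _
    · obtain ⟨k, hk⟩ := h
      have : Even (m - 1) := ⟨k, by omega⟩
      exact this.mul_right m
  rw [← pow_add, heq, pow_add, hev.neg_one_pow, mul_one]

theorem LS_rectangle'
    {m n : ℕ} (X : Fin n → F) (Y : Fin m → F)
    (hXinj : Function.Injective X) (hYinj : Function.Injective Y)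
    (hXY : ∀ i j, X i ≠ Y j) (l : ℕ) :
    LS (rectP (m + l) n) X Y = (-1 : F) ^ (l * n) * (∏ i, X i) ^ l * vanPair Y X := by
  classical
  have hI := indexOf_rect m n l
  rw [LS, hI, if_neg (lt_irrefl (0 : ℤ)), Int.toNat_zero]
  have hS : ((LSsign m n 0 (rectP (m + l) n) : ℤ) : F) = (-1 : F) ^ (n * (m + l)) := by
    have hsum : ∑ i ∈ Finset.range (n - 0), rectP (m + l) n (i + 1) = n * (m + l) := by
      rw [Nat.sub_zero]
      rw [Finset.sum_congr rfl (fun i hi =>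
        rectP_of_le (by omega) (by simp only [Finset.mem_range] at hi; omega))]
      rw [Finset.sum_const, Finset.card_range, smul_eq_mul]
    rw [LSsign, hsum]
    push_cast
    ring
  rw [hS, LSmat_det_rect X Y, sign_rot n m]
  have hx := vanDet_ne_zero hXinj
  have hy := vanDet_ne_zero hYinj
  field_simp
  rw [← neg_one_pow_key n m l]
  ring

end Helpers4

/-- **Littlewood's formula for a rectangular partition**:
`LS_{⟨(m+l)^n⟩}(−X; Y) = (−1)^{l·n} e(X)^l Δ(Y; X)`. -/
theorem LS_rectangle
    {F : Type*} [Field F] {m n : ℕ} (X : Fin n → F) (Y : Fin m → F)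
    (hXinj : Function.Injective X) (hYinj : Function.Injective Y)
    (hXY : ∀ i j, X i ≠ Y j) (l : ℕ) :
    LS (rectP (m + l) n) X Y = (-1 : F) ^ (l * n) * (∏ i, X i) ^ l * vanPair Y X := by
  exact LS_rectangle' X Y hXinj hYinj hXY l
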